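/- For n ≥ 1, the symmetrization over the symmetric group Sₙ of the rational function ∏_{1 ≤ i < j ≤ n} (λᵢ − λⱼ + c)/(λᵢ − λⱼ) in variables λ₁, …, λₙ and a parameter c is a polynomial in λ₁, …, λₙ, c; in fact it is the constant n!. -/

import Mathlib

open Finset Polynomial

lemma prod_pairs_succ {M : Type*} [CommMonoid M] {n : ℕ} (f : Fin (n+1) → Fin (n+1) → M) :
    ∏ p ∈ Finset.univ.filter (fun p : Fin (n+1) × Fin (n+1) => p.1 < p.2), f p.1 p.2
      = (∏ j : Fin n, f 0 j.succ) *
        ∏ p ∈ Finset.univ.filter (fun p : Fin n × Fin n => p.1 < p.2), f p.1.succ p.2.succ := by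
  rw [← Finset.prod_filter_mul_prod_filter_not
    (Finset.univ.filter (fun p : Fin (n+1) × Fin (n+1) => p.1 < p.2)) (fun p => p.1 = 0)]
  congr 1
  · refine Finset.prod_bij' (i := fun p hp => p.2.pred ?_) (j := fun j _ => ((0 : Fin (n+1)), j.succ))
      ?_ ?_ ?_ ?_ ?_
    · simp only [Finset.mem_filter] at hp
      exact Fin.pos_iff_ne_zero.mp (hp.2 ▸ hp.1.2)
    · intro a ha; exact Finset.mem_univ _
    · intro j _
      simp only [Finset.mem_filter, Finset.mem_univ, true_and]
      exact ⟨Fin.succ_pos j, trivial⟩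
    · intro a ha
      simp only [Finset.mem_filter] at ha
      obtain ⟨a1, a2⟩ := a
      simp only at ha ⊢
      rw [Fin.succ_pred]; rw [ha.2]
    · intro a _; simp [Fin.pred_succ]
    · intro a ha
      simp only [Finset.mem_filter] at ha
      rw [Fin.succ_pred]; rw [ha.2]
  · refine Finset.prod_bij' (i := fun p hp => ((p.1.pred ?_, p.2.pred ?_) : Fin n × Fin n))
      (j := fun p _ => (p.1.succ, p.2.succ)) ?_ ?_ ?_ ?_ ?_
    · simp only [Finset.mem_filter] at hp
      exact hp.2
    · simp only [Finset.mem_filter] at hp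
      exact Fin.pos_iff_ne_zero.mp (lt_of_le_of_lt (Fin.zero_le _) hp.1.2)
    · intro a ha
      simp only [Finset.mem_filter, Finset.mem_univ, true_and] at ha ⊢
      rw [← Fin.succ_lt_succ_iff, Fin.succ_pred, Fin.succ_pred]
      exact ha.1
    · intro a ha
      simp only [Finset.mem_filter, Finset.mem_univ, true_and] at ha ⊢
      exact ⟨Fin.succ_lt_succ_iff.mpr ha, Fin.succ_ne_zero _⟩
    · intro a _; simp [Fin.succ_pred]
    · intro a _; simp [Fin.pred_succ]
    · intro a _; simp [Fin.succ_pred]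

lemma prod_swap_succ {M : Type*} [CommMonoid M] {n : ℕ} (p : Fin (n+1)) (H : Fin (n+1) → M) :
    ∏ j : Fin n, H (Equiv.swap 0 p j.succ) = ∏ q ∈ Finset.univ.erase p, H q := by
  refine Finset.prod_bij' (i := fun j _ => Equiv.swap 0 p j.succ)
    (j := fun q hq => (Equiv.swap 0 p q).pred ?_) ?_ ?_ ?_ ?_ ?_
  · intro h
    rw [Finset.mem_erase] at hq
    apply hq.1
    have := (Equiv.swap 0 p).injective (h.trans (Equiv.swap_apply_right 0 p).symm)
    exact this
  · intro j _
    rw [Finset.mem_erase]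
    refine ⟨fun h => Fin.succ_ne_zero j ?_, Finset.mem_univ _⟩
    have := (Equiv.swap 0 p).injective (h.trans (Equiv.swap_apply_left 0 p).symm)
    exact this
  · intro q hq; exact Finset.mem_univ _
  · intro j _; simp [Fin.pred_succ, Equiv.swap_apply_self]
  · intro q hq; simp [Fin.succ_pred, Equiv.swap_apply_self]
  · intro j _; rfl

lemma sum_lagrange {F : Type*} [Field F] {n : ℕ} (x : Fin n → F)
    (hx : Function.Injective x) (c : F) :
    ∑ p : Fin n, ∏ q ∈ Finset.univ.erase p, (x p - x q + c) / (x p - x q) = (n : F) := by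
  have hsub : ∀ p q : Fin n, q ≠ p → x p - x q ≠ 0 := fun p q h =>
    sub_ne_zero.mpr fun he => h (hx he.symm)
  rcases eq_or_ne c 0 with rfl | hc
  · have : ∀ p : Fin n, ∏ q ∈ Finset.univ.erase p, (x p - x q + 0) / (x p - x q) = 1 := by
      intro p
      rw [Finset.prod_eq_one]
      intro q hq
      rw [add_zero, div_self (hsub p q (Finset.mem_erase.mp hq).1)]
    rw [Finset.sum_congr rfl fun p _ => this p]
    simp
  rcases Nat.eq_zero_or_pos n with rfl | hn
  · simp
  set A : Fin n → F := fun p => ∏ q ∈ Finset.univ.erase p, (x p - x q + c) / (x p - x q) with hA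
  set P : F[X] := ∏ q : Fin n, (X - C (x q - c)) with hP
  set Q : F[X] := ∏ q : Fin n, (X - C (x q)) with hQ
  set R : F[X] := ∑ q : Fin n, C (c * A q) * ∏ r ∈ Finset.univ.erase q, (X - C (x r)) with hR
  have hPm : P.Monic := monic_prod_of_monic _ _ fun q _ => monic_X_sub_C _
  have hQm : Q.Monic := monic_prod_of_monic _ _ fun q _ => monic_X_sub_C _
  have hPdeg : P.natDegree = n := by
    rw [hP, natDegree_prod_of_monic _ _ fun q _ => monic_X_sub_C _]
    simp only [natDegree_X_sub_C]
    simp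
  have hQdeg : Q.natDegree = n := by
    rw [hQ, natDegree_prod_of_monic _ _ fun q _ => monic_X_sub_C _]
    simp [natDegree_X_sub_C]
  have hErdeg : ∀ q : Fin n,
      (∏ r ∈ Finset.univ.erase q, (X - C (x r)) : F[X]).natDegree = n - 1 := by
    intro q
    rw [natDegree_prod_of_monic _ _ fun r _ => monic_X_sub_C _]
    simp [natDegree_X_sub_C, Finset.card_erase_of_mem]
  have hEm : ∀ q : Fin n, (∏ r ∈ Finset.univ.erase q, (X - C (x r)) : F[X]).Monic :=
    fun q => monic_prod_of_monic _ _ fun r _ => monic_X_sub_C _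
  -- eval of the pieces
  have hevalP : ∀ p : Fin n, P.eval (x p) = c * ∏ q ∈ Finset.univ.erase p, (x p - x q + c) := by
    intro p
    rw [hP, eval_prod, ← Finset.mul_prod_erase _ _ (Finset.mem_univ p)]
    congr 1
    · simp
    · exact Finset.prod_congr rfl fun q _ => by simp; ring
  have hevalQ : ∀ p : Fin n, Q.eval (x p) = 0 := by
    intro p
    rw [hQ, eval_prod]
    exact Finset.prod_eq_zero (Finset.mem_univ p) (by simp)
  have hevalR : ∀ p : Fin n, R.eval (x p) = c * ∏ q ∈ Finset.univ.erase p, (x p - x q + c) := by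
    intro p
    rw [hR, eval_finset_sum]
    rw [Finset.sum_eq_single p]
    · rw [eval_mul, eval_C, eval_prod]
      simp only [eval_sub, eval_X, eval_C]
      rw [mul_assoc]
      congr 1
      rw [hA, ← Finset.prod_mul_distrib]
      exact Finset.prod_congr rfl fun q hq =>
        div_mul_cancel₀ _ (hsub p q (Finset.mem_erase.mp hq).1)
    · intro q _ hqp
      rw [eval_mul, eval_prod]
      apply mul_eq_zero_of_right
      refine Finset.prod_eq_zero (Finset.mem_erase.mpr ⟨fun h => hqp h.symm, Finset.mem_univ p⟩) ?_
      simp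
    · intro h; exact absurd (Finset.mem_univ p) h
  -- the key polynomial identity
  have key : P = Q + R := by
    have hD : P - (Q + R) = 0 := by
      apply Polynomial.eq_zero_of_natDegree_lt_card_of_eval_eq_zero _ hx
      · intro p
        simp [hevalP p, hevalQ p, hevalR p]
      · rcases eq_or_ne (P - (Q + R)) 0 with h0 | h0
        · simpa [h0, Fintype.card_fin] using hn
        rw [Fintype.card_fin]
        have hdlt : (P - (Q + R)).degree < (n : ℕ) := by
          have hPd : P.degree = (n : ℕ) := by
            rw [Polynomial.degree_eq_natDegree hPm.ne_zero, hPdeg]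
          have hQd : Q.degree = (n : ℕ) := by
            rw [Polynomial.degree_eq_natDegree hQm.ne_zero, hQdeg]
          have h1 : (P - Q).degree < (n : ℕ) := by
            have := Polynomial.degree_sub_lt (hPd.trans hQd.symm) hPm.ne_zero
              (by rw [hPm.leadingCoeff, hQm.leadingCoeff])
            rwa [hPd] at this
          have h2 : R.degree < (n : ℕ) := by
            refine lt_of_le_of_lt (Polynomial.degree_sum_le _ _) ?_
            rw [Finset.sup_lt_iff (by exact_mod_cast WithBot.bot_lt_coe (n:ℕ))]
            intro q _
            refine lt_of_le_of_lt (Polynomial.degree_mul_le _ _) ?_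
            refine lt_of_le_of_lt (add_le_add Polynomial.degree_C_le
              (Polynomial.degree_le_natDegree)) ?_
            rw [hErdeg q, zero_add]
            exact_mod_cast WithBot.coe_lt_coe.mpr (Nat.sub_lt hn one_pos)
          calc (P - (Q + R)).degree = ((P - Q) - R).degree := by
                rw [sub_add_eq_sub_sub]
            _ ≤ max (P - Q).degree R.degree := Polynomial.degree_sub_le _ _
            _ < (n : ℕ) := max_lt h1 h2
        exact Polynomial.natDegree_lt_iff_degree_lt h0 |>.mpr hdlt
    exact sub_eq_zero.mp hD
  -- compare coefficients in degree n-1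
  have hcoeff : P.coeff (n - 1) = Q.coeff (n - 1) + R.coeff (n - 1) := by
    rw [key, Polynomial.coeff_add]
  have hPn : P.coeff (n - 1) = (∑ q : Fin n, -(x q - c)) := by
    have h := Polynomial.nextCoeff_of_natDegree_pos (p := P) (by rw [hPdeg]; exact hn)
    rw [hPdeg] at h
    rw [← h, hP, Polynomial.Monic.nextCoeff_prod _ _ fun q _ => monic_X_sub_C _]
    simp only [Polynomial.nextCoeff_X_sub_C]
  have hQn : Q.coeff (n - 1) = (∑ q : Fin n, -(x q)) := by
    have h := Polynomial.nextCoeff_of_natDegree_pos (p := Q) (by rw [hQdeg]; exact hn)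
    rw [hQdeg] at h
    rw [← h, hQ, Polynomial.Monic.nextCoeff_prod _ _ fun q _ => monic_X_sub_C _]
    simp only [Polynomial.nextCoeff_X_sub_C]
  have hRn : R.coeff (n - 1) = ∑ q : Fin n, c * A q := by
    rw [hR, Polynomial.finset_sum_coeff]
    refine Finset.sum_congr rfl fun q _ => ?_
    rw [Polynomial.coeff_C_mul]
    have : (∏ r ∈ Finset.univ.erase q, (X - C (x r)) : F[X]).coeff (n - 1) = 1 := by
      rw [← hErdeg q]
      exact (hEm q).coeff_natDegree
    rw [this, mul_one]
  rw [hPn, hQn, hRn] at hcoeff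
  have e1 : (∑ q : Fin n, -(x q - c)) = (∑ q : Fin n, -(x q)) + (n : F) * c := by
    rw [Finset.sum_congr rfl (fun q _ => (by ring : -(x q - c) = -(x q) + c)),
      Finset.sum_add_distrib, Finset.sum_const, Finset.card_univ, Fintype.card_fin,
      nsmul_eq_mul]
  rw [e1] at hcoeff
  have hsum : c * ∑ q : Fin n, A q = c * (n : F) := by
    rw [Finset.mul_sum]
    have := add_left_cancel hcoeff
    rw [← this]; ring
  exact mul_left_cancel₀ hc hsum

lemma symm_sum_eq_factorial {F : Type*} [Field F] :
    ∀ (n : ℕ) (l : Fin n → F), Function.Injective l → ∀ c : F,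
    (∑ σ : Equiv.Perm (Fin n),
        ∏ p ∈ Finset.univ.filter (fun p : Fin n × Fin n => p.1 < p.2),
          (l (σ p.1) - l (σ p.2) + c) / (l (σ p.1) - l (σ p.2)))
      = (n.factorial : F) := by
  intro n
  induction n with
  | zero => intro l hl c; simp
  | succ n ih =>
    intro l hl c
    rw [← Equiv.sum_comp (Equiv.Perm.decomposeFin (n := n)).symm, Fintype.sum_prod_type]
    have hyinj : ∀ p : Fin (n+1),
        Function.Injective (fun i : Fin n => l (Equiv.swap 0 p i.succ)) := fun p =>
      hl.comp ((Equiv.swap 0 p).injective.comp (Fin.succ_injective n))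
    have main : ∀ (p : Fin (n+1)) (e : Equiv.Perm (Fin n)),
        (∏ q ∈ Finset.univ.filter (fun q : Fin (n+1) × Fin (n+1) => q.1 < q.2),
          (l (Equiv.Perm.decomposeFin.symm (p, e) q.1)
              - l (Equiv.Perm.decomposeFin.symm (p, e) q.2) + c) /
            (l (Equiv.Perm.decomposeFin.symm (p, e) q.1)
              - l (Equiv.Perm.decomposeFin.symm (p, e) q.2)))
        = (∏ q ∈ Finset.univ.erase p, (l p - l q + c) / (l p - l q)) *
          ∏ q ∈ Finset.univ.filter (fun q : Fin n × Fin n => q.1 < q.2),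
            ((fun i : Fin n => l (Equiv.swap 0 p i.succ)) (e q.1)
                - (fun i : Fin n => l (Equiv.swap 0 p i.succ)) (e q.2) + c) /
              ((fun i : Fin n => l (Equiv.swap 0 p i.succ)) (e q.1)
                - (fun i : Fin n => l (Equiv.swap 0 p i.succ)) (e q.2)) := by
      intro p e
      rw [prod_pairs_succ (f := fun a b =>
        (l (Equiv.Perm.decomposeFin.symm (p, e) a) - l (Equiv.Perm.decomposeFin.symm (p, e) b) + c)
          / (l (Equiv.Perm.decomposeFin.symm (p, e) a)
              - l (Equiv.Perm.decomposeFin.symm (p, e) b)))]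
      congr 1
      · simp only [Equiv.Perm.decomposeFin_symm_apply_zero,
          Equiv.Perm.decomposeFin_symm_apply_succ]
        rw [← prod_swap_succ p (fun q => (l p - l q + c) / (l p - l q))]
        exact Equiv.prod_comp e (fun j =>
          (l p - l (Equiv.swap 0 p j.succ) + c) / (l p - l (Equiv.swap 0 p j.succ)))
      · exact Finset.prod_congr rfl fun q _ => by
          simp only [Equiv.Perm.decomposeFin_symm_apply_succ]
    rw [Finset.sum_congr rfl fun p _ => Finset.sum_congr rfl fun e _ => main p e]
    have inner : ∀ p : Fin (n+1),
        (∑ e : Equiv.Perm (Fin n),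
          ∏ q ∈ Finset.univ.filter (fun q : Fin n × Fin n => q.1 < q.2),
            ((fun i : Fin n => l (Equiv.swap 0 p i.succ)) (e q.1)
                - (fun i : Fin n => l (Equiv.swap 0 p i.succ)) (e q.2) + c) /
              ((fun i : Fin n => l (Equiv.swap 0 p i.succ)) (e q.1)
                - (fun i : Fin n => l (Equiv.swap 0 p i.succ)) (e q.2)))
          = (n.factorial : F) := fun p => ih _ (hyinj p) c
    calc (∑ p : Fin (n+1), ∑ e : Equiv.Perm (Fin n),
          (∏ q ∈ Finset.univ.erase p, (l p - l q + c) / (l p - l q)) *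
          ∏ q ∈ Finset.univ.filter (fun q : Fin n × Fin n => q.1 < q.2),
            ((fun i : Fin n => l (Equiv.swap 0 p i.succ)) (e q.1)
                - (fun i : Fin n => l (Equiv.swap 0 p i.succ)) (e q.2) + c) /
              ((fun i : Fin n => l (Equiv.swap 0 p i.succ)) (e q.1)
                - (fun i : Fin n => l (Equiv.swap 0 p i.succ)) (e q.2)))
        = ∑ p : Fin (n+1),
            (∏ q ∈ Finset.univ.erase p, (l p - l q + c) / (l p - l q)) * (n.factorial : F) := by
          refine Finset.sum_congr rfl fun p _ => ?_
          rw [← Finset.mul_sum, inner p]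
      _ = (∑ p : Fin (n+1), ∏ q ∈ Finset.univ.erase p, (l p - l q + c) / (l p - l q))
            * (n.factorial : F) := by rw [Finset.sum_mul]
      _ = ((n + 1 : ℕ) : F) * (n.factorial : F) := by rw [sum_lagrange l hl c]
      _ = ((n+1).factorial : F) := by
          rw [Nat.factorial_succ]
          push_cast
          ring

/-- The symmetrization over `Sₙ` of `∏_{i<j} (λᵢ - λⱼ + c)/(λᵢ - λⱼ)` is the
constant `n!` (in particular, a polynomial). -/
theorem symmetrization_is_factorial (F : Type*) [Field F] [CharZero F]
    (n : ℕ) (hn : 1 ≤ n) (l : Fin n → F) (hl : Function.Injective l) (c : F) :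
    (∑ σ : Equiv.Perm (Fin n),
        ∏ p ∈ Finset.univ.filter (fun p : Fin n × Fin n => p.1 < p.2),
          (l (σ p.1) - l (σ p.2) + c) / (l (σ p.1) - l (σ p.2)))
      = (n.factorial : F) :=
  symm_sum_eq_factorial n l hl c
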